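/- Let A, B be positive bounded linear operators on a complex Hilbert space. Then ‖A + B‖ ≤ (1/2)·(‖A‖ + ‖B‖ + sqrt((‖A‖ − ‖B‖)² + 4·‖A^{1/2}B^{1/2}‖²)). -/

import Mathlib

open scoped InnerProductSpace

variable {H : Type*} [NormedAddCommGroup H] [InnerProductSpace ℂ H] [CompleteSpace H]

/-- The numerical radius of a bounded linear operator. -/
noncomputable def numRad (A : H →L[ℂ] H) : ℝ :=
  sSup {r : ℝ | ∃ x : H, ‖x‖ = 1 ∧ r = ‖⟪A x, x⟫_ℂ‖}

/-- The absolute value `|A| = (A*A)^(1/2)` of a bounded linear operator. -/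
noncomputable def oabs (A : H →L[ℂ] H) : H →L[ℂ] H :=
  CFC.sqrt (ContinuousLinearMap.adjoint A * A)

/-- The spectral radius (as a real number). -/
noncomputable def specRad (A : H →L[ℂ] H) : ℝ := (spectralRadius ℂ A).toReal

private lemma scalar_aux (a b c u v L : ℝ) (ha : 0 ≤ a) (hb : 0 ≤ b)
    (hc : 0 ≤ c) (hu : 0 ≤ u) (hv : 0 ≤ v)
    (hLa : a ≤ L) (hLb : b ≤ L) (hkey : (L - a) * (L - b) = c^2) :
    (a*u + c*v)^2 + (c*u + b*v)^2 ≤ L^2 * (u^2+v^2) := by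
  have hQ : 2*c*(u*v) ≤ (L-a)*u^2 + (L-b)*v^2 := by
    have h1 : Real.sqrt (L-a) ^ 2 = L - a := Real.sq_sqrt (by linarith)
    have h2 : Real.sqrt (L-b) ^ 2 = L - b := Real.sq_sqrt (by linarith)
    have h3 : Real.sqrt (L-a) * Real.sqrt (L-b) = c := by
      rw [← Real.sqrt_mul (by linarith), hkey, Real.sqrt_sq hc]
    calc 2*c*(u*v) = 2 * (Real.sqrt (L-a) * u) * (Real.sqrt (L-b) * v) := by
          rw [← h3]; ring
      _ ≤ (Real.sqrt (L-a) * u)^2 + (Real.sqrt (L-b) * v)^2 := two_mul_le_add_sq _ _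
      _ = (L-a)*u^2 + (L-b)*v^2 := by rw [mul_pow, mul_pow, h1, h2]
  nlinarith [mul_nonneg hu hv, sq_nonneg (u*v), mul_nonneg (mul_nonneg hu hv) hc,
    sq_nonneg (u-v), sq_nonneg (u+v), mul_nonneg ha hb]

set_option maxHeartbeats 2000000 in
set_option synthInstance.maxHeartbeats 400000 in
theorem stmt13 (A B : H →L[ℂ] H) (hA : A.IsPositive) (hB : B.IsPositive) :
    ‖A + B‖ ≤ (1 / 2) * (‖A‖ + ‖B‖ +
      Real.sqrt ((‖A‖ - ‖B‖) ^ 2 + 4 * ‖CFC.sqrt A * CFC.sqrt B‖ ^ 2)) := by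
  classical
  have hA0 : (0 : H →L[ℂ] H) ≤ A := (ContinuousLinearMap.nonneg_iff_isPositive A).mpr hA
  have hB0 : (0 : H →L[ℂ] H) ≤ B := (ContinuousLinearMap.nonneg_iff_isPositive B).mpr hB
  set sA : H →L[ℂ] H := CFC.sqrt A with hsAdef
  set sB : H →L[ℂ] H := CFC.sqrt B with hsBdef
  have hsA0 : (0 : H →L[ℂ] H) ≤ sA := CFC.sqrt_nonneg A
  have hsB0 : (0 : H →L[ℂ] H) ≤ sB := CFC.sqrt_nonneg B
  have hsAsa : IsSelfAdjoint sA := .of_nonneg hsA0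
  have hsBsa : IsSelfAdjoint sB := .of_nonneg hsB0
  have hsAA : sA * sA = A := CFC.sqrt_mul_sqrt_self A hA0
  have hsBB : sB * sB = B := CFC.sqrt_mul_sqrt_self B hB0
  set a := ‖A‖ with hadef
  set b := ‖B‖ with hbdef
  set c := ‖sA * sB‖ with hcdef
  have ha0 : 0 ≤ a := norm_nonneg _
  have hb0 : 0 ≤ b := norm_nonneg _
  have hc0 : 0 ≤ c := norm_nonneg _
  -- norm of sB * sA is also c
  have hcsym : ‖sB * sA‖ = c := by
    have : sB * sA = star (sA * sB) := by
      rw [star_mul, hsAsa.star_eq, hsBsa.star_eq]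
    rw [this, norm_star]
  set s := Real.sqrt ((a - b)^2 + 4 * c^2) with hsdef
  have hs0 : 0 ≤ s := Real.sqrt_nonneg _
  have hs2 : s^2 = (a-b)^2 + 4*c^2 := Real.sq_sqrt (by positivity)
  have hge1 : a - b ≤ s := by nlinarith [sq_nonneg (s - (a-b))]
  have hge2 : b - a ≤ s := by nlinarith [sq_nonneg (s - (b-a))]
  set L := (a + b + s)/2 with hLdef
  have hLa : a ≤ L := by rw [hLdef]; linarith
  have hLb : b ≤ L := by rw [hLdef]; linarith
  have hL0 : 0 ≤ L := le_trans ha0 hLa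
  have hkey : (L - a) * (L - b) = c^2 := by
    have : (L - a) * (L - b) = (s^2 - (a-b)^2)/4 := by rw [hLdef]; ring
    rw [this, hs2]; ring
  -- the block operator
  set e := WithLp.prodContinuousLinearEquiv 2 ℂ H H with hedef
  set C : H →L[ℂ] WithLp 2 (H × H) :=
    (e.symm : (H × H) →L[ℂ] WithLp 2 (H × H)).comp (sA.prod sB) with hCdef
  set D : WithLp 2 (H × H) →L[ℂ] H :=
    ((sA.comp (ContinuousLinearMap.fst ℂ H H)) +
      (sB.comp (ContinuousLinearMap.snd ℂ H H))).comp
      (e : WithLp 2 (H × H) →L[ℂ] (H × H)) with hDdef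
  have hCapp : ∀ x : H, C x = e.symm (sA x, sB x) := fun x => rfl
  have hDapp : ∀ y : WithLp 2 (H × H), D y = sA (e y).1 + sB (e y).2 := fun y => rfl
  have heapp : ∀ y : WithLp 2 (H × H), e y = (y.fst, y.snd) := fun y => rfl
  -- D is the adjoint of C
  have hD : D = ContinuousLinearMap.adjoint C := by
    rw [ContinuousLinearMap.eq_adjoint_iff]
    intro x y
    rw [hDapp, hCapp]
    have h1 : (e.symm (sA y, sB y) : WithLp 2 (H × H)).ofLp.1 = sA y := rfl
    have h2 : (e.symm (sA y, sB y) : WithLp 2 (H × H)).ofLp.2 = sB y := rfl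
    rw [WithLp.prod_inner_apply, h1, h2, inner_add_left, heapp]
    congr 1
    · exact hsAsa.isSymmetric _ _
    · exact hsBsa.isSymmetric _ _
  -- D ∘ C = A + B
  have hDC : D.comp C = A + B := by
    ext x
    have : (e (e.symm (sA x, sB x))) = (sA x, sB x) := e.apply_symm_apply _
    simp only [ContinuousLinearMap.comp_apply, hCapp, hDapp, this,
      ContinuousLinearMap.add_apply]
    rw [← hsAA, ← hsBB]; rfl
  -- norms
  have hnorm1 : ‖A + B‖ = ‖C‖ * ‖C‖ := by
    rw [← hDC, hD, ContinuousLinearMap.norm_adjoint_comp_self]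
  have hCadj : ‖ContinuousLinearMap.adjoint C‖ = ‖C‖ :=
    ContinuousLinearMap.adjoint.norm_map C
  have hnorm2 : ‖C.comp D‖ = ‖C‖ * ‖C‖ := by
    rw [hD]
    have h := ContinuousLinearMap.norm_adjoint_comp_self (ContinuousLinearMap.adjoint C)
    rw [ContinuousLinearMap.adjoint_adjoint, hCadj] at h
    exact h
  -- bound ‖C ∘ D‖ ≤ L
  have hbound : ‖C.comp D‖ ≤ L := by
    refine ContinuousLinearMap.opNorm_le_bound _ hL0 fun y => ?_
    set u := ‖(y : WithLp 2 (H × H)).fst‖ with hudef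
    set v := ‖(y : WithLp 2 (H × H)).snd‖ with hvdef
    have hu0 : 0 ≤ u := norm_nonneg _
    have hv0 : 0 ≤ v := norm_nonneg _
    have hfst1 : ((C.comp D) y).fst = A (y.fst) + (sA * sB) (y.snd) := by
      show sA (D y) = _
      rw [hDapp, map_add, ← ContinuousLinearMap.mul_apply, ← ContinuousLinearMap.mul_apply,
        hsAA]
      rfl
    have hsnd1 : ((C.comp D) y).snd = (sB * sA) (y.fst) + B (y.snd) := by
      show sB (D y) = _
      rw [hDapp, map_add, ← ContinuousLinearMap.mul_apply, ← ContinuousLinearMap.mul_apply,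
        hsBB]
      rfl
    have hfst' : ‖((C.comp D) y).fst‖ ≤ a * u + c * v := by
      rw [hfst1]
      refine le_trans (norm_add_le _ _) (add_le_add ?_ ?_)
      · exact A.le_opNorm _
      · exact (sA * sB).le_opNorm _
    have hsnd' : ‖((C.comp D) y).snd‖ ≤ c * u + b * v := by
      rw [hsnd1]
      refine le_trans (norm_add_le _ _) (add_le_add ?_ ?_)
      · rw [← hcsym]; exact (sB * sA).le_opNorm _
      · exact B.le_opNorm _
    have hysq : ‖y‖^2 = u^2 + v^2 := WithLp.prod_norm_sq_eq_of_L2 y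
    have hCDsq : ‖(C.comp D) y‖^2 = ‖((C.comp D) y).fst‖^2 + ‖((C.comp D) y).snd‖^2 :=
      WithLp.prod_norm_sq_eq_of_L2 _
    have hsq : ‖(C.comp D) y‖^2 ≤ (L * ‖y‖)^2 := by
      rw [hCDsq]
      calc ‖((C.comp D) y).fst‖^2 + ‖((C.comp D) y).snd‖^2
          ≤ (a*u + c*v)^2 + (c*u + b*v)^2 :=
            add_le_add (pow_le_pow_left₀ (norm_nonneg _) hfst' 2)
              (pow_le_pow_left₀ (norm_nonneg _) hsnd' 2)
        _ ≤ L^2 * (u^2 + v^2) := scalar_aux a b c u v L ha0 hb0 hc0 hu0 hv0 hLa hLb hkey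
        _ = (L * ‖y‖)^2 := by rw [mul_pow, hysq]
    calc ‖(C.comp D) y‖ = Real.sqrt (‖(C.comp D) y‖^2) := (Real.sqrt_sq (norm_nonneg _)).symm
      _ ≤ Real.sqrt ((L * ‖y‖)^2) := Real.sqrt_le_sqrt hsq
      _ = L * ‖y‖ := Real.sqrt_sq (by positivity)
  have hfinal : ‖A + B‖ ≤ L := by rw [hnorm1, ← hnorm2]; exact hbound
  rw [hLdef] at hfinal
  linarith
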